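/- Let H be an infinite-dimensional complex Hilbert space and let G denote the set of closed separable subspaces of H of infinite dimension and infinite codimension. For X, Y ∈ G, we have Y ⊆ X if and only if every Z ∈ G with Z ⊆ X^⊥ satisfies Z ⊆ Y^⊥. -/

import Mathlib

set_option maxHeartbeats 1000000

/-- The set of closed, separable, infinite-dimensional subspaces of infinite codimension. -/
def sepGrassmannian (H : Type*) [NormedAddCommGroup H] [InnerProductSpace ℂ H] :
    Set (Submodule ℂ H) :=
  {X | IsClosed (X : Set H) ∧ TopologicalSpace.SeparableSpace X ∧
    ¬ FiniteDimensional ℂ X ∧ ¬ FiniteDimensional ℂ Xᗮ}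

theorem aux_infdim {H : Type*} [NormedAddCommGroup H] [InnerProductSpace ℂ H]
    (Z : Submodule ℂ H) (g : ℕ → H) (hg : LinearIndependent ℂ g)
    (hgZ : ∀ n, g n ∈ Z) : ¬ FiniteDimensional ℂ Z := by
  intro hfin
  have h2 : LinearIndependent ℂ (⇑Z.subtype ∘ fun n => (⟨g n, hgZ n⟩ : Z)) := hg
  exact Module.Finite.not_linearIndependent_of_infinite _ h2.of_comp

/-- Any vector of a closed infinite-dimensional subspace `W` lies in a member of the separable
Grassmannian contained in `W`, provided `Wᗮ` is infinite-dimensional. -/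
theorem exists_sep_mem {H : Type*} [NormedAddCommGroup H] [InnerProductSpace ℂ H]
    (W : Submodule ℂ H) (hWc : IsClosed (W : Set H)) (hW : ¬ FiniteDimensional ℂ W)
    (hWo : ¬ FiniteDimensional ℂ Wᗮ) (v : H) (hv : v ∈ W) :
    ∃ Z ∈ sepGrassmannian H, Z ≤ W ∧ v ∈ Z := by
  -- get a linearly independent sequence in W
  have : Infinite (Module.Basis.ofVectorSpaceIndex ℂ W) := by
    by_contra hfin
    rw [not_infinite_iff_finite] at hfin
    haveI := hfin
    haveI := Fintype.ofFinite (Module.Basis.ofVectorSpaceIndex ℂ W)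
    exact hW (Module.Finite.of_basis (Module.Basis.ofVectorSpace ℂ W))
  set b := Module.Basis.ofVectorSpace ℂ W
  set f : ℕ → W := fun n => b (Infinite.natEmbedding _ n)
  have hf : LinearIndependent ℂ f :=
    b.linearIndependent.comp _ (Infinite.natEmbedding _).injective
  set g : ℕ → H := fun n => (f n : H)
  have hg : LinearIndependent ℂ g := hf.map' W.subtype W.ker_subtype
  set s : Set H := insert v (Set.range g)
  have hsW : s ⊆ (W : Set H) := by
    rintro x (rfl | ⟨n, rfl⟩)
    · exact hv
    · exact (f n).2
  have hsc : s.Countable := (Set.countable_range g).insert v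
  set Z : Submodule ℂ H := (Submodule.span ℂ s).topologicalClosure
  have hspanW : Submodule.span ℂ s ≤ W := Submodule.span_le.2 hsW
  have hZW : Z ≤ W := Submodule.topologicalClosure_minimal _ hspanW hWc
  have hvZ : v ∈ Z :=
    Submodule.le_topologicalClosure _ (Submodule.subset_span (Set.mem_insert _ _))
  have hZc : IsClosed (Z : Set H) := Submodule.isClosed_topologicalClosure _
  have hZsep : TopologicalSpace.IsSeparable (Z : Set H) :=
    (hsc.isSeparable.span (R := ℂ)).closure
  have hgZ : ∀ n, g n ∈ Z := fun n =>
    Submodule.le_topologicalClosure _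
      (Submodule.subset_span (Set.mem_insert_of_mem _ ⟨n, rfl⟩))
  clear_value Z
  refine ⟨Z, ⟨hZc, hZsep.separableSpace, ?_, ?_⟩, hZW, hvZ⟩
  · exact aux_infdim Z g hg hgZ
  · -- infinite-codimensional
    intro hfin
    have : Wᗮ ≤ Zᗮ := Submodule.orthogonal_le hZW
    exact hWo (Submodule.finiteDimensional_of_le this)

theorem stmt14 {H : Type*} [NormedAddCommGroup H] [InnerProductSpace ℂ H] [CompleteSpace H]
    (hH : ¬ FiniteDimensional ℂ H)
    (X Y : Submodule ℂ H) (hX : X ∈ sepGrassmannian H) (hY : Y ∈ sepGrassmannian H) :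
    Y ≤ X ↔ ∀ Z ∈ sepGrassmannian H, Z ≤ Xᗮ → Z ≤ Yᗮ := by
  obtain ⟨hXc, hXs, hXi, hXo⟩ := hX
  obtain ⟨hYc, hYs, hYi, hYo⟩ := hY
  constructor
  · intro h Z _ hZX
    exact hZX.trans (Submodule.orthogonal_le h)
  · intro h
    haveI : CompleteSpace X := hXc.completeSpace_coe
    haveI : CompleteSpace Y := hYc.completeSpace_coe
    have hXY : Xᗮ ≤ Yᗮ := by
      intro v hv
      have hXoo : ¬ FiniteDimensional ℂ Xᗮᗮ := by
        rw [Submodule.orthogonal_orthogonal]; exact hXi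
      obtain ⟨Z, hZ, hZX, hvZ⟩ :=
        exists_sep_mem Xᗮ (Submodule.isClosed_orthogonal X) hXo hXoo v hv
      exact h Z hZ hZX hvZ
    calc Y = Yᗮᗮ := (Submodule.orthogonal_orthogonal Y).symm
    _ ≤ Xᗮᗮ := Submodule.orthogonal_le hXY
    _ = X := Submodule.orthogonal_orthogonal X
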